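/- Let (Z,μ) be a measured space with μ(Z) finite, I a set with a map i ↦ n_i to ℕ such that each I_n = {i ∈ I : n_i = n} is finite, and for each i ∈ I and ε > 0 a measurable set B_i(ε) ⊆ Z, non-decreasing in ε. Let f_1, f_2, f_3, f_4 : ℕ → (0,∞) and f_5 : (0,∞) → (0,∞). Assume there exists c ≥ 1 such that: (1) f_3 ≤ f_2; (2) 1/(f_5 ∘ f_2) ≤ f_4·f_1; (3) there exist c', c'' > 1 such that for all ε, ε' > 0 with ε' ≤ c'·ε one has f_5(ε') ≤ c''·f_5(ε); (4) for all n, (1/c)·f_1(n) ≤ Card(I_n) ≤ c·f_1(n); (5) for all i ∈ I and ε ∈ (0, f_2(n_i)], (1/c)·f_4(n_i)·f_5(ε) ≤ μ(B_i(ε)) ≤ c·f_4(n_i)·f_5(ε); (6) for each n, the sets B_i(f_2(n)) for i ∈ I_n are pairwise disjoint; (7) for all i, j ∈ I with n_i < n_j, if B_j(f_3(n_j)) ∩ B_i(f_3(n_i)) ≠ ∅ then B_j(f_2(n_j)) ⊆ B_i(c·f_3(n_i)). Let E be the set of points of Z belonging to B_i(f_3(n_i)) for infinitely many i. If ∑_{n=0}^∞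 f_1(n)·f_4(n)·f_5(f_3(n)) diverges, then μ(E) > 0. -/

import Mathlib

open MeasureTheory Filter
open scoped ENNReal

lemma cs_sets {Z : Type*} [MeasurableSpace Z] (μ : Measure Z) (F : Finset ℕ)
    (A : ℕ → Set Z) (hA : ∀ n, MeasurableSet (A n)) :
    (∑ n ∈ F, μ (A n)) ^ 2 ≤ μ (⋃ n ∈ F, A n) * ∑ n ∈ F, ∑ m ∈ F, μ (A n ∩ A m) := by
  set f : Z → ℝ≥0∞ := fun z => ∑ n ∈ F, (A n).indicator 1 z with hf
  have hfm : Measurable f := by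
    apply Finset.measurable_sum
    intro n _
    exact (measurable_one.indicator (hA n))
  set U : Set Z := ⋃ n ∈ F, A n with hU
  have hUm : MeasurableSet U := F.measurableSet_biUnion (fun n _ => hA n)
  have hint1 : ∫⁻ z, f z ∂μ = ∑ n ∈ F, μ (A n) := by
    rw [lintegral_finset_sum _ (fun n _ => measurable_one.indicator (hA n))]
    exact Finset.sum_congr rfl fun n _ => lintegral_indicator_one (hA n)
  have hint2 : ∫⁻ z, (f z) ^ (2:ℝ) ∂μ = ∑ n ∈ F, ∑ m ∈ F, μ (A n ∩ A m) := by
    have : ∀ z, (f z) ^ (2:ℝ) = ∑ n ∈ F, ∑ m ∈ F, ((A n ∩ A m).indicator 1 z) := by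
      intro z
      rw [show ((2:ℝ)) = ((2:ℕ):ℝ) by norm_num, ENNReal.rpow_natCast]
      rw [pow_two, hf, Finset.sum_mul_sum]
      refine Finset.sum_congr rfl fun n _ => Finset.sum_congr rfl fun m _ => ?_
      rw [← Set.inter_indicator_mul]
      simp [Set.indicator]
    simp_rw [this]
    rw [lintegral_finset_sum _ (fun n _ => Finset.measurable_sum _
      (fun m _ => measurable_one.indicator ((hA n).inter (hA m))))]
    refine Finset.sum_congr rfl fun n _ => ?_
    rw [lintegral_finset_sum _ (fun m _ => measurable_one.indicator ((hA n).inter (hA m)))]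
    exact Finset.sum_congr rfl fun m _ => lintegral_indicator_one ((hA n).inter (hA m))
  have hconj : Real.HolderConjugate 2 2 := Real.HolderConjugate.two_two
  set g : Z → ℝ≥0∞ := U.indicator 1 with hg
  have hgm : Measurable g := measurable_one.indicator hUm
  have hgf : ∀ z, (g * f) z = f z := by
    intro z
    by_cases hz : z ∈ U
    · simp [hg, Set.indicator_of_mem hz]
    · have hfz : f z = 0 := by
        apply Finset.sum_eq_zero
        intro n hn
        have : z ∉ A n := fun h => hz (Set.mem_biUnion hn h)
        simp [Set.indicator_of_notMem this]
      simp [hfz]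
  have hg2 : ∫⁻ z, (g z) ^ (2:ℝ) ∂μ = μ U := by
    have : ∀ z, (g z) ^ (2:ℝ) = g z := by
      intro z
      by_cases hz : z ∈ U <;>
        simp [hg, Set.indicator_of_mem, Set.indicator_of_notMem, hz,
          ENNReal.rpow_two]
    simp_rw [this]
    exact lintegral_indicator_one hUm
  have holder := ENNReal.lintegral_mul_le_Lp_mul_Lq μ hconj hgm.aemeasurable
    hfm.aemeasurable
  simp_rw [hgf, hg2, hint1, hint2] at holder
  calc (∑ n ∈ F, μ (A n)) ^ 2
      ≤ (μ U ^ (1/2:ℝ) * (∑ n ∈ F, ∑ m ∈ F, μ (A n ∩ A m)) ^ (1/2:ℝ)) ^ 2 :=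
        pow_le_pow_left' holder 2
    _ = μ U * ∑ n ∈ F, ∑ m ∈ F, μ (A n ∩ A m) := by
        rw [mul_pow, ← ENNReal.rpow_natCast (μ U ^ (1/2:ℝ)),
          ← ENNReal.rpow_natCast ((∑ n ∈ F, ∑ m ∈ F, μ (A n ∩ A m)) ^ (1/2:ℝ)),
          ← ENNReal.rpow_mul, ← ENNReal.rpow_mul]
        norm_num

lemma ks {Z : Type*} [MeasurableSpace Z] (μ : Measure Z) (hfin : μ Set.univ ≠ ⊤)
    (A : ℕ → Set Z) (hA : ∀ n, MeasurableSet (A n)) (C : ℝ≥0∞) (hC1 : 1 ≤ C) (hCt : C ≠ ⊤)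
    (hq : ∀ m n, m ≠ n → μ (A m ∩ A n) ≤ C * (μ (A m) * μ (A n)))
    (hsum : ∑' n, μ (A n) = ⊤) :
    0 < μ (Filter.atTop.limsup A) := by
  have hμfin : ∀ s : Set Z, μ s ≠ ⊤ := fun s =>
    ne_top_of_le_ne_top hfin (measure_mono (Set.subset_univ s))
  have hC0 : C ≠ 0 := fun h => by simp [h] at hC1
  set G : ℕ → Set Z := fun k => ⋃ n, ⋃ (_ : k ≤ n), A n with hG
  have hGm : ∀ k, MeasurableSet (G k) :=
    fun k => MeasurableSet.iUnion fun n => MeasurableSet.iUnion fun _ => hA n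
  have key : ∀ k, (2 * C)⁻¹ ≤ μ (G k) := by
    intro k
    have hR : (∑ n ∈ Finset.range k, μ (A n)) ≠ ⊤ :=
      (ENNReal.sum_lt_top.mpr fun n _ => (hμfin (A n)).lt_top).ne
    obtain ⟨s, hs⟩ : ∃ s : Finset ℕ,
        C⁻¹ + ∑ n ∈ Finset.range k, μ (A n) < ∑ n ∈ s, μ (A n) := by
      have h1 : C⁻¹ + ∑ n ∈ Finset.range k, μ (A n) < ⊤ :=
        ENNReal.add_lt_top.mpr ⟨ENNReal.inv_lt_top.mpr (by positivity),
          hR.lt_top⟩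
      rw [← hsum, ENNReal.tsum_eq_iSup_sum] at h1
      exact lt_iSup_iff.mp h1
    set F' : Finset ℕ := s.filter (fun n => k ≤ n) with hF'
    have hF'k : ∀ n ∈ F', k ≤ n := fun n hn => (Finset.mem_filter.mp hn).2
    set S : ℝ≥0∞ := ∑ n ∈ F', μ (A n) with hSdef
    have hSt : S ≠ ⊤ := (ENNReal.sum_lt_top.mpr fun n _ => (hμfin (A n)).lt_top).ne
    have hCS : C⁻¹ ≤ S := by
      have hsplit : ∑ n ∈ s, μ (A n) =
          S + ∑ n ∈ s.filter (fun n => ¬ k ≤ n), μ (A n) :=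
        (Finset.sum_filter_add_sum_filter_not s _ _).symm
      have hrest : ∑ n ∈ s.filter (fun n => ¬ k ≤ n), μ (A n)
          ≤ ∑ n ∈ Finset.range k, μ (A n) := by
        apply Finset.sum_le_sum_of_subset
        intro n hn
        rw [Finset.mem_range]
        exact lt_of_not_ge (Finset.mem_filter.mp hn).2
      have : C⁻¹ + ∑ n ∈ Finset.range k, μ (A n) <
          S + ∑ n ∈ Finset.range k, μ (A n) :=
        hs.trans_le (by rw [hsplit]; exact add_le_add_right hrest S)
      exact ((ENNReal.add_lt_add_iff_right hR).mp this).le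
    have hS0 : S ≠ 0 := by
      intro h
      rw [h, nonpos_iff_eq_zero, ENNReal.inv_eq_zero] at hCS
      exact hCt hCS
    have hcs := cs_sets μ F' A hA
    set U' : Set Z := ⋃ n ∈ F', A n with hU'
    have hT : ∑ n ∈ F', ∑ m ∈ F', μ (A n ∩ A m) ≤ S + C * S * S := by
      have hrow : ∀ n ∈ F', ∑ m ∈ F', μ (A n ∩ A m) ≤ μ (A n) + C * μ (A n) * S := by
        intro n hn
        rw [← Finset.add_sum_erase _ _ hn]
        refine add_le_add (by rw [Set.inter_self]) ?_
        calc ∑ m ∈ F'.erase n, μ (A n ∩ A m)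
            ≤ ∑ m ∈ F'.erase n, C * (μ (A n) * μ (A m)) :=
              Finset.sum_le_sum fun m hm => hq n m (Finset.ne_of_mem_erase hm).symm
          _ ≤ ∑ m ∈ F', C * (μ (A n) * μ (A m)) :=
              Finset.sum_le_sum_of_subset (Finset.erase_subset n F')
          _ = C * μ (A n) * S := by rw [hSdef, Finset.mul_sum]; ring_nf
      calc ∑ n ∈ F', ∑ m ∈ F', μ (A n ∩ A m)
          ≤ ∑ n ∈ F', (μ (A n) + C * μ (A n) * S) := Finset.sum_le_sum hrow
        _ = S + C * S * S := by
            rw [Finset.sum_add_distrib, hSdef]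
            congr 1
            rw [← Finset.sum_mul, ← Finset.mul_sum]
    have hT2 : S + C * S * S ≤ 2 * C * S ^ 2 := by
      have h1 : (1:ℝ≥0∞) ≤ C * S := by
        calc (1:ℝ≥0∞) = C * C⁻¹ := (ENNReal.mul_inv_cancel hC0 hCt).symm
          _ ≤ C * S := mul_le_mul_right hCS C
      calc S + C * S * S ≤ C * S * S + C * S * S := by
            refine add_le_add_left ?_ _
            calc S = 1 * S := (one_mul S).symm
              _ ≤ C * S * S := mul_le_mul_left h1 S
        _ = 2 * C * S ^ 2 := by ring
    have hfinal : S ^ 2 ≤ μ U' * (2 * C * S ^ 2) :=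
      hcs.trans (mul_le_mul_right (hT.trans hT2) _)
    have h2C0 : (2 : ℝ≥0∞) * C ≠ 0 := by
      simp [hC0]
    have h2Ct : (2 : ℝ≥0∞) * C ≠ ⊤ := ENNReal.mul_ne_top (by simp) hCt
    have hS2 : S ^ 2 ≠ 0 := pow_ne_zero _ hS0
    have hS2t : S ^ 2 ≠ ⊤ := by
      exact ENNReal.pow_ne_top hSt
    have hU'le : (2 * C)⁻¹ ≤ μ U' := by
      rw [← ENNReal.mul_le_mul_iff_left hS2 hS2t]
      calc (2 * C)⁻¹ * S ^ 2 ≤ (2 * C)⁻¹ * (μ U' * (2 * C * S ^ 2)) :=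
            mul_le_mul_right hfinal _
        _ = ((2 * C)⁻¹ * (2 * C)) * (μ U' * S ^ 2) := by ring
        _ = μ U' * S ^ 2 := by
            rw [ENNReal.inv_mul_cancel h2C0 h2Ct, one_mul]
    refine hU'le.trans (measure_mono ?_)
    exact Set.iUnion₂_subset fun n hn =>
      Set.subset_iUnion₂ (s := fun n _ => A n) n (hF'k n hn)
  have hlim : Filter.atTop.limsup A = ⋂ k, G k := by
    rw [Filter.limsup_eq_iInf_iSup_of_nat]
    rfl
  have hanti : Antitone G := by
    intro a b hab
    exact Set.iUnion₂_subset fun n hn =>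
      Set.subset_iUnion₂ (s := fun n _ => A n) n (hab.trans hn)
  have hmeas := hanti.measure_iInter (μ := μ)
    (fun k => (hGm k).nullMeasurableSet) ⟨0, hμfin _⟩
  rw [hlim, hmeas]
  refine lt_of_lt_of_le ?_ (le_iInf key)
  exact ENNReal.inv_pos.mpr (ENNReal.mul_ne_top (by simp) hCt)


lemma doubling_aux (f5 : ℝ → ℝ) (hf5 : ∀ ε : ℝ, 0 < ε → 0 < f5 ε)
    (c' c'' : ℝ) (hc' : 1 < c') (hc'' : 1 < c'')
    (h3 : ∀ ε ε' : ℝ, 0 < ε → 0 < ε' → ε' ≤ c' * ε → f5 ε' ≤ c'' * f5 ε)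
    (c : ℝ) (hc : 1 ≤ c) :
    ∃ K : ℝ, 1 ≤ K ∧ ∀ ε ε' : ℝ, 0 < ε → 0 < ε' → ε' ≤ c * ε → f5 ε' ≤ K * f5 ε := by
  obtain ⟨k, hk⟩ : ∃ k : ℕ, c < c' ^ k := pow_unbounded_of_one_lt c hc'
  have main : ∀ k : ℕ, ∀ ε ε' : ℝ, 0 < ε → 0 < ε' → ε' ≤ c' ^ k * ε →
      f5 ε' ≤ c'' ^ (k + 1) * f5 ε := by
    intro k
    induction k with
    | zero =>
      intro ε ε' hε hε' hle
      rw [pow_zero, one_mul] at hle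
      rw [pow_one]
      exact h3 ε ε' hε hε' (hle.trans (le_mul_of_one_le_left hε.le hc'.le))
    | succ k ih =>
      intro ε ε' hε hε' hle
      by_cases hcase : ε' ≤ c' ^ k * ε
      · refine (ih ε ε' hε hε' hcase).trans ?_
        have h1 : (0:ℝ) < f5 ε := hf5 ε hε
        have : c'' ^ (k+1) ≤ c'' ^ (k+2) := pow_le_pow_right₀ hc''.le (by omega)
        nlinarith
      · push_neg at hcase
        set ε₁ : ℝ := c' ^ k * ε with hε₁
        have hε₁pos : 0 < ε₁ := mul_pos (pow_pos (by linarith) k) hε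
        have h1 : f5 ε' ≤ c'' * f5 ε₁ := by
          apply h3 ε₁ ε' hε₁pos hε'
          calc ε' ≤ c' ^ (k+1) * ε := hle
            _ = c' * ε₁ := by ring
        have h2 : f5 ε₁ ≤ c'' ^ (k+1) * f5 ε := ih ε ε₁ hε hε₁pos le_rfl
        calc f5 ε' ≤ c'' * f5 ε₁ := h1
          _ ≤ c'' * (c'' ^ (k+1) * f5 ε) := by nlinarith
          _ = c'' ^ (k+2) * f5 ε := by ring
  refine ⟨c'' ^ (k + 1), one_le_pow₀ hc''.le, ?_⟩
  intro ε ε' hε hε' hle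
  exact main k ε ε' hε hε' (hle.trans (by nlinarith [pow_pos (lt_trans one_pos hc') k, hε.le]))

/-- Divergence part of the geometric Borel–Cantelli lemma. With the notation of the
convergence part, assume there is `c ≥ 1` such that (1) `f₃ ≤ f₂`;
(2) `1/(f₅ ∘ f₂) ≤ f₄·f₁`; (3) there are `c', c'' > 1` with `f₅ ε' ≤ c''·f₅ ε` whenever
`ε' ≤ c'·ε`; (4) `(1/c)·f₁ n ≤ Card I_n ≤ c·f₁ n`; (5) for `0 < ε ≤ f₂ (nidx i)`,
`(1/c)·f₄(nidx i)·f₅ ε ≤ μ (B i ε) ≤ c·f₄(nidx i)·f₅ ε`; (6) for each `n` the sets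
`B i (f₂ n)`, `i ∈ I_n`, are pairwise disjoint; (7) for `nidx i < nidx j`, if
`B j (f₃ (nidx j))` meets `B i (f₃ (nidx i))` then `B j (f₂ (nidx j)) ⊆ B i (c·f₃ (nidx i))`.
If `∑ f₁ n · f₄ n · f₅ (f₃ n)` diverges, then the set of points belonging to
`B i (f₃ (nidx i))` for infinitely many `i` has positive measure. -/
theorem geometric_borel_cantelli_divergence
    {Z : Type*} [MeasurableSpace Z] (μ : Measure Z) (hfin : μ Set.univ ≠ ⊤)
    {I : Type*} (nidx : I → ℕ) (hfib : ∀ n : ℕ, {i : I | nidx i = n}.Finite)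
    (B : I → ℝ → Set Z)
    (hBmeas : ∀ i : I, ∀ ε : ℝ, 0 < ε → MeasurableSet (B i ε))
    (hBmono : ∀ i : I, ∀ ε ε' : ℝ, 0 < ε → ε ≤ ε' → B i ε ⊆ B i ε')
    (f1 f2 f3 f4 : ℕ → ℝ) (f5 : ℝ → ℝ)
    (hf1 : ∀ n, 0 < f1 n) (hf2 : ∀ n, 0 < f2 n) (hf3 : ∀ n, 0 < f3 n)
    (hf4 : ∀ n, 0 < f4 n) (hf5 : ∀ ε : ℝ, 0 < ε → 0 < f5 ε)
    (c : ℝ) (hc : 1 ≤ c)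
    (h1 : ∀ n, f3 n ≤ f2 n)
    (h2 : ∀ n, 1 / f5 (f2 n) ≤ f4 n * f1 n)
    (h3 : ∃ c' c'' : ℝ, 1 < c' ∧ 1 < c'' ∧
      ∀ ε ε' : ℝ, 0 < ε → 0 < ε' → ε' ≤ c' * ε → f5 ε' ≤ c'' * f5 ε)
    (h4 : ∀ n : ℕ, (1 / c) * f1 n ≤ ((hfib n).toFinset.card : ℝ) ∧
      ((hfib n).toFinset.card : ℝ) ≤ c * f1 n)
    (h5 : ∀ i : I, ∀ ε : ℝ, 0 < ε → ε ≤ f2 (nidx i) →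
      ENNReal.ofReal ((1 / c) * f4 (nidx i) * f5 ε) ≤ μ (B i ε) ∧
      μ (B i ε) ≤ ENNReal.ofReal (c * f4 (nidx i) * f5 ε))
    (h6 : ∀ n : ℕ, ∀ i j : I, nidx i = n → nidx j = n → i ≠ j →
      Disjoint (B i (f2 n)) (B j (f2 n)))
    (h7 : ∀ i j : I, nidx i < nidx j →
      (B j (f3 (nidx j)) ∩ B i (f3 (nidx i))).Nonempty →
      B j (f2 (nidx j)) ⊆ B i (c * f3 (nidx i)))
    (hdiv : ¬ Summable (fun n : ℕ => f1 n * f4 n * f5 (f3 n))) :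
    0 < μ {z : Z | {i : I | z ∈ B i (f3 (nidx i))}.Infinite} := by
  classical
  obtain ⟨c', c'', hc'1, hc''1, h3'⟩ := h3
  obtain ⟨K, hK1, hK⟩ := doubling_aux f5 hf5 c' c'' hc'1 hc''1 h3' c hc
  have hc0 : (0:ℝ) < c := lt_of_lt_of_le one_pos hc
  have hKpos : (0:ℝ) < K := lt_of_lt_of_le one_pos hK1
  set In : ℕ → Finset I := fun n => (hfib n).toFinset with hIndef
  have hmemIn : ∀ {n : ℕ} {i : I}, i ∈ In n ↔ nidx i = n := fun {n i} =>
    (hfib n).mem_toFinset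
  set A : ℕ → Set Z := fun n => ⋃ i ∈ In n, B i (f3 n) with hAdef
  have hAm : ∀ n, MeasurableSet (A n) :=
    fun n => (In n).measurableSet_biUnion fun i _ => hBmeas i _ (hf3 n)
  -- transported versions of h5
  have h5' : ∀ n : ℕ, ∀ i ∈ In n, ∀ ε : ℝ, 0 < ε → ε ≤ f2 n →
      ENNReal.ofReal (1 / c * f4 n * f5 ε) ≤ μ (B i ε) ∧
      μ (B i ε) ≤ ENNReal.ofReal (c * f4 n * f5 ε) := by
    intro n i hi ε hε hεle
    have hni := hmemIn.mp hi
    have := h5 i ε hε (by rw [hni]; exact hεle)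
    rwa [hni] at this
  -- pairwise disjointness at scale f3
  have hdisj3 : ∀ n : ℕ, Set.PairwiseDisjoint (↑(In n)) (fun i => B i (f3 n)) := by
    intro n i hi j hj hij
    exact Disjoint.mono (hBmono i _ _ (hf3 n) (h1 n)) (hBmono j _ _ (hf3 n) (h1 n))
      (h6 n i j (hmemIn.mp hi) (hmemIn.mp hj) hij)
  have hAeq : ∀ n, μ (A n) = ∑ i ∈ In n, μ (B i (f3 n)) := fun n =>
    measure_biUnion_finset (hdisj3 n) fun i _ => hBmeas i _ (hf3 n)
  -- lower bound for μ (A n)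
  have hAlow : ∀ n, ENNReal.ofReal (1 / c * f1 n * (1 / c * f4 n * f5 (f3 n)))
      ≤ μ (A n) := by
    intro n
    have h4n := hf4 n
    have h5n := hf5 _ (hf3 n)
    have ht0 : (0:ℝ) ≤ 1 / c * f4 n * f5 (f3 n) := by positivity
    rw [hAeq n]
    calc ENNReal.ofReal (1 / c * f1 n * (1 / c * f4 n * f5 (f3 n)))
        ≤ ENNReal.ofReal (((In n).card : ℝ) * (1 / c * f4 n * f5 (f3 n))) :=
          ENNReal.ofReal_le_ofReal (mul_le_mul_of_nonneg_right (h4 n).1 ht0)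
      _ = ((In n).card : ℝ≥0∞) * ENNReal.ofReal (1 / c * f4 n * f5 (f3 n)) := by
          rw [ENNReal.ofReal_mul (Nat.cast_nonneg _), ENNReal.ofReal_natCast]
      _ = ∑ _i ∈ In n, ENNReal.ofReal (1 / c * f4 n * f5 (f3 n)) := by
          rw [Finset.sum_const, nsmul_eq_mul]
      _ ≤ ∑ i ∈ In n, μ (B i (f3 n)) :=
          Finset.sum_le_sum fun i hi => (h5' n i hi (f3 n) (hf3 n) (h1 n)).1
  have hAlowg : ∀ n, ENNReal.ofReal (f1 n * f4 n * f5 (f3 n))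
      ≤ ENNReal.ofReal (c ^ 2) * μ (A n) := by
    intro n
    calc ENNReal.ofReal (f1 n * f4 n * f5 (f3 n))
        = ENNReal.ofReal (c ^ 2) *
          ENNReal.ofReal (1 / c * f1 n * (1 / c * f4 n * f5 (f3 n))) := by
          rw [← ENNReal.ofReal_mul (by positivity)]
          congr 1
          field_simp
      _ ≤ ENNReal.ofReal (c ^ 2) * μ (A n) := mul_le_mul_right (hAlow n) _
  -- divergence of ∑ μ (A n)
  have hsum : ∑' n, μ (A n) = ⊤ := by
    rw [← top_le_iff]
    refine le_trans ?_ (ENNReal.tsum_le_tsum hAlow)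
    rw [top_le_iff]
    by_contra hne
    apply hdiv
    have hpos : ∀ n, 0 < 1 / c * f1 n * (1 / c * f4 n * f5 (f3 n)) := by
      intro n
      have := hf1 n; have := hf4 n; have := hf5 _ (hf3 n)
      positivity
    have hs0 : Summable (fun n => 1 / c * f1 n * (1 / c * f4 n * f5 (f3 n))) := by
      have h := ENNReal.summable_toReal hne
      exact h.congr fun n => ENNReal.toReal_ofReal (hpos n).le
    have hs1 := hs0.mul_left (c * c)
    refine hs1.congr fun n => ?_
    field_simp
  -- trivial lower bound in the non-doubling regime
  have htriv : ∀ n, f2 n < c * f3 n →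
      ENNReal.ofReal (1 / c * (1 / c) * (1 / K)) ≤ μ (A n) := by
    intro n hn
    refine le_trans (ENNReal.ofReal_le_ofReal ?_) (hAlow n)
    have hd : f5 (f2 n) ≤ K * f5 (f3 n) := hK (f3 n) (f2 n) (hf3 n) (hf2 n) hn.le
    have h2' : 1 ≤ f4 n * f1 n * f5 (f2 n) := by
      have h := h2 n
      rw [div_le_iff₀ (hf5 _ (hf2 n))] at h
      linarith
    have hgK : 1 ≤ K * (f1 n * f4 n * f5 (f3 n)) := by
      nlinarith [hf4 n, hf1 n, hf5 _ (hf3 n), hf5 _ (hf2 n), hKpos]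
    have h1c : (0:ℝ) < 1 / c := by positivity
    have h1K : 1 / K ≤ f1 n * f4 n * f5 (f3 n) := by
      rw [div_le_iff₀ hKpos]
      nlinarith [hgK]
    nlinarith [mul_le_mul_of_nonneg_left h1K (le_of_lt (mul_pos h1c h1c))]
  -- the quasi-independence constant
  set C : ℝ≥0∞ := 1 + ENNReal.ofReal (c ^ 8 * K) +
    (ENNReal.ofReal (1 / c * (1 / c) * (1 / K)))⁻¹ with hCdef
  have hδpos : (0:ℝ) < 1 / c * (1 / c) * (1 / K) := by positivity
  have hδ0 : ENNReal.ofReal (1 / c * (1 / c) * (1 / K)) ≠ 0 :=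
    (ENNReal.ofReal_pos.mpr hδpos).ne'
  have hC1 : 1 ≤ C := by
    rw [hCdef, add_assoc]
    exact self_le_add_right _ _
  have hCt : C ≠ ⊤ := by
    rw [hCdef]
    refine ENNReal.add_ne_top.mpr ⟨ENNReal.add_ne_top.mpr
      ⟨ENNReal.one_ne_top, ENNReal.ofReal_ne_top⟩, ENNReal.inv_ne_top.mpr hδ0⟩
  -- quasi-independence
  have hqmain : ∀ m n, m < n → μ (A m ∩ A n) ≤ C * (μ (A m) * μ (A n)) := by
    intro m n hmn
    by_cases hcase : c * f3 m ≤ f2 m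
    · -- main case
      have hc3m : (0:ℝ) < c * f3 m := mul_pos hc0 (hf3 m)
      set J : Finset I := (In n).filter
        (fun j => ∃ i ∈ In m, (B j (f3 n) ∩ B i (f3 m)).Nonempty) with hJdef
      have hsubJ : A m ∩ A n ⊆ ⋃ j ∈ J, B j (f3 n) := by
        rintro z ⟨hzm, hzn⟩
        obtain ⟨j, hj, hzj⟩ := Set.mem_iUnion₂.mp hzn
        obtain ⟨i, hi, hzi⟩ := Set.mem_iUnion₂.mp hzm
        exact Set.mem_iUnion₂.mpr
          ⟨j, Finset.mem_filter.mpr ⟨hj, ⟨i, hi, ⟨z, hzj, hzi⟩⟩⟩, hzj⟩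
      have hb : μ (A m ∩ A n) ≤
          (J.card : ℝ≥0∞) * ENNReal.ofReal (c * f4 n * f5 (f3 n)) := by
        refine (measure_mono hsubJ).trans ((measure_biUnion_finset_le J _).trans ?_)
        calc ∑ j ∈ J, μ (B j (f3 n))
            ≤ ∑ _j ∈ J, ENNReal.ofReal (c * f4 n * f5 (f3 n)) :=
              Finset.sum_le_sum fun j hj =>
                (h5' n j (Finset.mem_filter.mp hj).1 (f3 n) (hf3 n) (h1 n)).2
          _ = _ := by rw [Finset.sum_const, nsmul_eq_mul]
      have hdisj2 : Set.PairwiseDisjoint (↑J) (fun j => B j (f2 n)) := by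
        intro i hi j hj hij
        exact h6 n i j (hmemIn.mp (Finset.mem_filter.mp hi).1)
          (hmemIn.mp (Finset.mem_filter.mp hj).1) hij
      have hcover : (⋃ j ∈ J, B j (f2 n)) ⊆ ⋃ i ∈ In m, B i (c * f3 m) := by
        refine Set.iUnion₂_subset fun j hj => ?_
        obtain ⟨hjIn, i, hi, hne⟩ := Finset.mem_filter.mp hj
        have h7' := h7 i j (by rw [hmemIn.mp hi, hmemIn.mp hjIn]; exact hmn)
          (by rw [hmemIn.mp hi, hmemIn.mp hjIn]; exact hne)
        rw [hmemIn.mp hi, hmemIn.mp hjIn] at h7'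
        exact h7'.trans (Set.subset_iUnion₂ (s := fun i _ => B i (c * f3 m)) i hi)
      have hcardJ : (J.card : ℝ≥0∞) * ENNReal.ofReal (f4 n * f5 (f2 n)) ≤
          ENNReal.ofReal c * (((In m).card : ℝ≥0∞) *
            ENNReal.ofReal (c * f4 m * f5 (c * f3 m))) := by
        have hlow2 : ∀ j ∈ J, ENNReal.ofReal (f4 n * f5 (f2 n)) ≤
            ENNReal.ofReal c * μ (B j (f2 n)) := by
          intro j hj
          have hl := (h5' n j (Finset.mem_filter.mp hj).1 (f2 n) (hf2 n) le_rfl).1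
          calc ENNReal.ofReal (f4 n * f5 (f2 n))
              = ENNReal.ofReal c * ENNReal.ofReal (1 / c * f4 n * f5 (f2 n)) := by
                rw [← ENNReal.ofReal_mul hc0.le]
                congr 1
                field_simp
            _ ≤ ENNReal.ofReal c * μ (B j (f2 n)) := mul_le_mul_right hl _
        calc (J.card : ℝ≥0∞) * ENNReal.ofReal (f4 n * f5 (f2 n))
            = ∑ _j ∈ J, ENNReal.ofReal (f4 n * f5 (f2 n)) := by
              rw [Finset.sum_const, nsmul_eq_mul]
          _ ≤ ∑ j ∈ J, ENNReal.ofReal c * μ (B j (f2 n)) :=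
              Finset.sum_le_sum hlow2
          _ = ENNReal.ofReal c * ∑ j ∈ J, μ (B j (f2 n)) := by
              rw [Finset.mul_sum]
          _ = ENNReal.ofReal c * μ (⋃ j ∈ J, B j (f2 n)) := by
              rw [measure_biUnion_finset hdisj2 fun j _ => hBmeas j _ (hf2 n)]
          _ ≤ ENNReal.ofReal c * μ (⋃ i ∈ In m, B i (c * f3 m)) :=
              mul_le_mul_right (measure_mono hcover) _
          _ ≤ ENNReal.ofReal c * ∑ i ∈ In m, μ (B i (c * f3 m)) :=
              mul_le_mul_right (measure_biUnion_finset_le _ _) _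
          _ ≤ ENNReal.ofReal c * (((In m).card : ℝ≥0∞) *
              ENNReal.ofReal (c * f4 m * f5 (c * f3 m))) := by
              refine mul_le_mul_right ?_ _
              calc ∑ i ∈ In m, μ (B i (c * f3 m))
                  ≤ ∑ _i ∈ In m, ENNReal.ofReal (c * f4 m * f5 (c * f3 m)) :=
                    Finset.sum_le_sum fun i hi =>
                      (h5' m i hi (c * f3 m) hc3m hcase).2
                _ = _ := by rw [Finset.sum_const, nsmul_eq_mul]
      -- pass to the reals
      have hcardJR : (J.card : ℝ) * (f4 n * f5 (f2 n)) ≤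
          c * (((In m).card : ℝ) * (c * f4 m * f5 (c * f3 m))) := by
        have h := hcardJ
        rw [← ENNReal.ofReal_natCast J.card,
          ← ENNReal.ofReal_mul (Nat.cast_nonneg _),
          ← ENNReal.ofReal_natCast (In m).card,
          ← ENNReal.ofReal_mul (Nat.cast_nonneg _),
          ← ENNReal.ofReal_mul hc0.le] at h
        refine (ENNReal.ofReal_le_ofReal_iff ?_).mp h
        have h4m := hf4 m
        have h5m := hf5 _ hc3m
        have hcn : (0:ℝ) ≤ ((In m).card : ℝ) := Nat.cast_nonneg _
        positivity
      have hf5c : f5 (c * f3 m) ≤ K * f5 (f3 m) := hK (f3 m) (c * f3 m) (hf3 m) hc3m le_rfl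
      have hcardJR2 : (J.card : ℝ) * (f4 n * f5 (f2 n)) ≤
          c ^ 3 * K * (f1 m * f4 m * f5 (f3 m)) := by
        have hcm := (h4 m).2
        have hcnn : (0:ℝ) ≤ ((In m).card : ℝ) := Nat.cast_nonneg _
        nlinarith [hf4 m, hf1 m, hf5 _ hc3m, hf5 _ (hf3 m), hc0,
          mul_le_mul_of_nonneg_right hcm
            (mul_nonneg (mul_nonneg hc0.le (hf4 m).le) (hf5 _ hc3m).le),
          mul_le_mul_of_nonneg_left hf5c
            (mul_nonneg (mul_nonneg hc0.le hc0.le)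
              (mul_nonneg (mul_nonneg hc0.le (hf1 m).le) (hf4 m).le))]
      have h2' : 1 ≤ f4 n * f1 n * f5 (f2 n) := by
        have h := h2 n
        rw [div_le_iff₀ (hf5 _ (hf2 n))] at h
        linarith
      have hkeyR : (J.card : ℝ) * (c * f4 n * f5 (f3 n)) ≤
          c ^ 4 * K * (f1 m * f4 m * f5 (f3 m)) * (f1 n * f4 n * f5 (f3 n)) := by
        have hn1 : (0:ℝ) ≤ c ^ 4 * K * (f1 m * f4 m * f5 (f3 m)) * f5 (f3 n) := by
          have := (hf1 m).le; have := (hf4 m).le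
          have := (hf5 _ (hf3 m)).le; have := (hf5 _ (hf3 n)).le
          positivity
        rw [← mul_le_mul_iff_of_pos_right (hf5 _ (hf2 n))]
        nlinarith [mul_le_mul_of_nonneg_right hcardJR2
            (mul_nonneg hc0.le (hf5 _ (hf3 n)).le),
          mul_le_mul_of_nonneg_left h2' hn1]
      -- conclude in ℝ≥0∞
      have hck4 : (0:ℝ) ≤ c ^ 4 * K := by positivity
      have hgm0 : (0:ℝ) ≤ f1 m * f4 m * f5 (f3 m) := by
        have := (hf1 m).le; have := (hf4 m).le; have := (hf5 _ (hf3 m)).le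
        positivity
      calc μ (A m ∩ A n)
          ≤ (J.card : ℝ≥0∞) * ENNReal.ofReal (c * f4 n * f5 (f3 n)) := hb
        _ = ENNReal.ofReal ((J.card : ℝ) * (c * f4 n * f5 (f3 n))) := by
            rw [ENNReal.ofReal_mul (Nat.cast_nonneg _), ENNReal.ofReal_natCast]
        _ ≤ ENNReal.ofReal (c ^ 4 * K * (f1 m * f4 m * f5 (f3 m)) *
            (f1 n * f4 n * f5 (f3 n))) := ENNReal.ofReal_le_ofReal hkeyR
        _ = ENNReal.ofReal (c ^ 4 * K) * ENNReal.ofReal (f1 m * f4 m * f5 (f3 m)) *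
            ENNReal.ofReal (f1 n * f4 n * f5 (f3 n)) := by
            rw [← ENNReal.ofReal_mul hck4,
              ← ENNReal.ofReal_mul (mul_nonneg hck4 hgm0)]
        _ ≤ ENNReal.ofReal (c ^ 4 * K) * (ENNReal.ofReal (c ^ 2) * μ (A m)) *
            (ENNReal.ofReal (c ^ 2) * μ (A n)) :=
            mul_le_mul' (mul_le_mul' le_rfl (hAlowg m)) (hAlowg n)
        _ = (ENNReal.ofReal (c ^ 4 * K) * ENNReal.ofReal (c ^ 2) *
            ENNReal.ofReal (c ^ 2)) * (μ (A m) * μ (A n)) := by ring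
        _ = ENNReal.ofReal (c ^ 8 * K) * (μ (A m) * μ (A n)) := by
            rw [← ENNReal.ofReal_mul hck4,
              ← ENNReal.ofReal_mul (mul_nonneg hck4 (by positivity))]
            congr 2
            ring
        _ ≤ C * (μ (A m) * μ (A n)) := by
            refine mul_le_mul_left ?_ _
            rw [hCdef]
            calc ENNReal.ofReal (c ^ 8 * K) ≤ 1 + ENNReal.ofReal (c ^ 8 * K) :=
                le_add_self
              _ ≤ 1 + ENNReal.ofReal (c ^ 8 * K) +
                  (ENNReal.ofReal (1 / c * (1 / c) * (1 / K)))⁻¹ :=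
                self_le_add_right _ _
    · -- trivial case
      push_neg at hcase
      have hm := htriv m hcase
      calc μ (A m ∩ A n) ≤ μ (A n) := measure_mono Set.inter_subset_right
        _ = 1 * μ (A n) := (one_mul _).symm
        _ ≤ ((ENNReal.ofReal (1 / c * (1 / c) * (1 / K)))⁻¹ * μ (A m)) * μ (A n) := by
            refine mul_le_mul_left ?_ _
            rw [← ENNReal.inv_mul_cancel hδ0 ENNReal.ofReal_ne_top]
            exact mul_le_mul_right hm _
        _ ≤ C * (μ (A m) * μ (A n)) := by
            rw [mul_assoc]
            refine mul_le_mul_left ?_ _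
            rw [hCdef]
            exact le_add_self
  have hq : ∀ m n, m ≠ n → μ (A m ∩ A n) ≤ C * (μ (A m) * μ (A n)) := by
    intro m n hne
    rcases lt_or_gt_of_ne hne with h | h
    · exact hqmain m n h
    · rw [Set.inter_comm]
      exact (hqmain n m h).trans_eq (by ring)
  have hks := ks μ hfin A hAm C hC1 hCt hq hsum
  refine hks.trans_le (measure_mono ?_)
  -- limsup A ⊆ the target set
  intro z hz
  have hlim : Filter.atTop.limsup A = ⋂ k, ⋃ n, ⋃ (_ : k ≤ n), A n := by
    rw [Filter.limsup_eq_iInf_iSup_of_nat]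
    rfl
  rw [hlim] at hz
  simp only [Set.mem_iInter] at hz
  rw [Set.mem_setOf_eq]
  by_contra hfin'
  rw [Set.not_infinite] at hfin'
  obtain ⟨k, hk⟩ := (hfin'.image nidx).bddAbove
  have hz' := hz (k + 1)
  obtain ⟨n, hn⟩ := Set.mem_iUnion.mp hz'
  obtain ⟨hkn, hzA⟩ := Set.mem_iUnion.mp hn
  obtain ⟨i, hi, hzB⟩ := Set.mem_iUnion₂.mp hzA
  have hni : nidx i = n := hmemIn.mp hi
  have hmem : nidx i ∈ nidx '' {i | z ∈ B i (f3 (nidx i))} :=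
    ⟨i, by rw [Set.mem_setOf_eq, hni]; exact hzB, rfl⟩
  have hle := hk hmem
  omega
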